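/- Let X be a separable Banach space, U ⊆ X open, ξ a gauge, r₀ > 0, and let C ⊆ X be a compact connected set that is (ξ,r₀) almost minimizing in U. If x ∈ C, 0 < r < min(diam C, r₀), and B(x,r) ⊆ U, then the cardinality of C ∩ ∂B(x,r) is at least 2. -/

import Mathlib

open MeasureTheory

/-- A gauge: a nondecreasing function on `(0,∞)`, nonnegative, tending to `0` at `0⁺`. -/
def IsGauge (ξ : ℝ → ℝ) : Prop :=
  MonotoneOn ξ (Set.Ioi 0) ∧ (∀ r : ℝ, 0 < r → 0 ≤ ξ r) ∧
    Filter.Tendsto ξ (nhdsWithin 0 (Set.Ioi 0)) (nhds 0)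

/-- `C` is a compact connected set of finite length, `(ξ, r₀)` almost minimizing in `U`. -/
def AlmostMinimizing {X : Type*} [NormedAddCommGroup X] [NormedSpace ℝ X]
    [MeasurableSpace X] [BorelSpace X]
    (ξ : ℝ → ℝ) (r₀ : ℝ) (U : Set X) (C : Set X) : Prop :=
  IsCompact C ∧ IsConnected C ∧ μH[1] C < ⊤ ∧
    ∀ x ∈ C ∩ U, ∀ r : ℝ, 0 < r → r ≤ r₀ → Metric.closedBall x r ⊆ U →
      ∀ C' : Set X, IsCompact C' → IsConnected C' →
        C' \ Metric.closedBall x r = C \ Metric.closedBall x r →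
        μH[1] (C ∩ Metric.closedBall x r) ≤
          ENNReal.ofReal (1 + ξ r) * μH[1] (C' ∩ Metric.closedBall x r)

/-- A connected set containing the center and a point at distance at least `r` has at
least `r` of length inside the closed ball of radius `r`. -/
lemma ball_length_lb {X : Type*} [MetricSpace X] [MeasurableSpace X] [BorelSpace X]
    {s : Set X} (hs : IsPreconnected s) {z w : X} (hz : z ∈ s) (hw : w ∈ s)
    {r : ℝ} (hr0 : 0 ≤ r) (hrw : r ≤ dist z w) :
    ENNReal.ofReal r ≤ μH[1] (s ∩ Metric.closedBall z r) := by
  have himg : Set.Icc (0:ℝ) r ⊆ (dist z) '' (s ∩ Metric.closedBall z r) := by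
    intro t ht
    have h1 : Set.Icc (0:ℝ) (dist z w) ⊆ (dist z) '' s :=
      (hs.image _ (LipschitzWith.dist_right z).continuous.continuousOn).Icc_subset
        ⟨z, hz, dist_self z⟩ ⟨w, hw, rfl⟩
    obtain ⟨u, hu, hut⟩ := h1 ⟨ht.1, ht.2.trans hrw⟩
    refine ⟨u, ⟨hu, ?_⟩, hut⟩
    rw [Metric.mem_closedBall, dist_comm, hut]
    exact ht.2
  calc ENNReal.ofReal r = μH[1] (Set.Icc (0:ℝ) r) := by
        rw [MeasureTheory.hausdorffMeasure_real, Real.volume_Icc, sub_zero]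
    _ ≤ μH[1] ((dist z) '' (s ∩ Metric.closedBall z r)) := measure_mono himg
    _ ≤ 1 * μH[1] (s ∩ Metric.closedBall z r) := by
        simpa using (LipschitzWith.dist_right z).hausdorffMeasure_image_le
          (zero_le_one) (s ∩ Metric.closedBall z r)
    _ = _ := one_mul _

/-- A connected set has length at least the distance between any two of its points. -/
lemma conn_length_lb {X : Type*} [MetricSpace X] [MeasurableSpace X] [BorelSpace X]
    {s : Set X} (hs : IsPreconnected s) {z w : X} (hz : z ∈ s) (hw : w ∈ s) :
    ENNReal.ofReal (dist z w) ≤ μH[1] s :=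
  (ball_length_lb hs hz hw dist_nonneg le_rfl).trans
    (measure_mono Set.inter_subset_left)

lemma hausdorff_one_singleton {X : Type*} [MetricSpace X] [MeasurableSpace X] [BorelSpace X]
    (y : X) : μH[1] ({y} : Set X) = 0 := by
  rcases MeasureTheory.Measure.hausdorffMeasure_zero_or_top (zero_lt_one) ({y} : Set X) with h | h
  · exact h
  · rw [MeasureTheory.Measure.hausdorffMeasure_zero_singleton] at h
    exact absurd h (by simp)

theorem stmt_8 {X : Type*} [NormedAddCommGroup X] [NormedSpace ℝ X] [CompleteSpace X]
    [TopologicalSpace.SeparableSpace X] [MeasurableSpace X] [BorelSpace X]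
    (U : Set X) (hU : IsOpen U) (ξ : ℝ → ℝ) (hξ : IsGauge ξ) (r₀ : ℝ) (hr₀ : 0 < r₀)
    (C : Set X) (hC : AlmostMinimizing ξ r₀ U C)
    (x : X) (hx : x ∈ C) (r : ℝ) (hr : 0 < r)
    (hrd : ENNReal.ofReal r < EMetric.diam C) (hrr₀ : r < r₀)
    (hB : Metric.closedBall x r ⊆ U) :
    2 ≤ (C ∩ Metric.sphere x r).encard := by
  obtain ⟨hcomp, hconn, hfin, hmin⟩ := hC
  rw [show (2:ℕ∞) = 1 + 1 from rfl, ENat.add_one_le_iff (by simp),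
    Set.one_lt_encard_iff]
  by_contra hnt
  push_neg at hnt
  have hxU : x ∈ C ∩ U := ⟨hx, hB (Metric.mem_closedBall_self hr.le)⟩
  rcases (C ∩ Metric.sphere x r).eq_empty_or_nonempty with hS | ⟨y, hyC, hyS⟩
  · -- no point on the sphere: C is inside the ball, so `C'={x}` shows `μH[1] C = 0`
    have hCball : C ⊆ Metric.ball x r := by
      refine hconn.isPreconnected.subset_left_of_subset_union (v := (Metric.closedBall x r)ᶜ)
        Metric.isOpen_ball Metric.isClosed_closedBall.isOpen_compl ?_ ?_
        ⟨x, hx, Metric.mem_ball_self hr⟩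
      · exact disjoint_compl_right.mono_left Metric.ball_subset_closedBall
      · intro z hz
        rcases lt_trichotomy (dist z x) r with h | h | h
        · exact Or.inl h
        · exact absurd (Set.mem_inter hz (Metric.mem_sphere.2 h))
            (Set.eq_empty_iff_forall_notMem.1 hS z)
        · exact Or.inr (by simpa [Metric.mem_closedBall] using h.not_ge)
    have hdiff : ({x} : Set X) \ Metric.closedBall x r = C \ Metric.closedBall x r := by
      rw [Set.diff_eq_empty.2 (Set.singleton_subset_iff.2 (Metric.mem_closedBall_self hr.le)),
        Set.diff_eq_empty.2 (hCball.trans Metric.ball_subset_closedBall)]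
    have hle := hmin x hxU r hr hrr₀.le hB {x} isCompact_singleton
      isConnected_singleton hdiff
    have hC0 : μH[1] C = 0 := by
      have h1 : μH[1] (({x} : Set X) ∩ Metric.closedBall x r) = 0 :=
        le_antisymm ((measure_mono Set.inter_subset_left).trans
          (hausdorff_one_singleton x).le) zero_le
      have h2 : C ∩ Metric.closedBall x r = C :=
        Set.inter_eq_left.2 (hCball.trans Metric.ball_subset_closedBall)
      rw [h2, h1, mul_zero] at hle
      exact le_antisymm hle zero_le
    -- but `diam C > r` forces two distinct points in `C`, hence positive length
    obtain ⟨a, ha, b, hb, hab⟩ : ∃ a ∈ C, ∃ b ∈ C, ENNReal.ofReal r < edist a b := by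
      by_contra hcon
      push_neg at hcon
      exact absurd (EMetric.diam_le fun a ha b hb => hcon a ha b hb) hrd.not_ge
    have := (conn_length_lb hconn.isPreconnected ha hb).trans hC0.le
    rw [nonpos_iff_eq_zero, ENNReal.ofReal_eq_zero] at this
    have : edist a b = 0 := by
      rw [edist_dist, ENNReal.ofReal_eq_zero]; exact this
    rw [this] at hab
    exact absurd hab (by simp)
  · -- exactly one point `y` on the sphere: `C' = C \ ball x r` is a competitor
    have hyx : dist x y = r := by rw [dist_comm]; exact hyS
    set C' : Set X := C \ Metric.ball x r with hC'def
    have hyC' : y ∈ C' := ⟨hyC, fun h => (Metric.mem_ball.1 h).ne hyS⟩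
    have hC'closed : IsClosed C' := hcomp.isClosed.sdiff Metric.isOpen_ball
    -- key connectedness step
    have hkey : ∀ t1 t2 : Set X, IsClosed t1 → IsClosed t2 → C' ⊆ t1 ∪ t2 →
        Disjoint t1 t2 → y ∈ t1 → C' ⊆ t1 := by
      intro t1 t2 ht1 ht2 hsub hdisj hy1
      have hW : C' ∩ t2 = C ∩ ((Metric.closedBall x r)ᶜ ∩ t1ᶜ) := by
        ext z
        constructor
        · rintro ⟨⟨hzC, hzb⟩, hz2⟩
          have hz1 : z ∉ t1 := fun h => hdisj.ne_of_mem h hz2 rfl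
          refine ⟨hzC, ⟨?_, hz1⟩⟩
          intro hzcb
          have hzs : z ∈ Metric.sphere x r :=
            le_antisymm hzcb (not_lt.1 (by simpa [Metric.mem_ball] using hzb))
          have : z = y := hnt z y ⟨hzC, hzs⟩ ⟨hyC, hyS⟩
          exact hz1 (this ▸ hy1)
        · rintro ⟨hzC, hzcb, hz1⟩
          have hzC' : z ∈ C' :=
            ⟨hzC, fun h => hzcb (Metric.ball_subset_closedBall h)⟩
          rcases hsub hzC' with h | h
          · exact absurd h hz1
          · exact ⟨hzC', h⟩
      have hWempty : C' ∩ t2 = ∅ := by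
        by_contra hne
        obtain ⟨z0, hz0⟩ := Set.nonempty_iff_ne_empty.2 hne
        have hz0' : z0 ∈ C ∩ ((Metric.closedBall x r)ᶜ ∩ t1ᶜ) := hW ▸ hz0
        have hWclosed : IsClosed (C' ∩ t2) := hC'closed.inter ht2
        obtain ⟨p, hpC, hpu, hpv⟩ := hconn.isPreconnected
          ((Metric.closedBall x r)ᶜ ∩ t1ᶜ) (C' ∩ t2)ᶜ
          ((Metric.isClosed_closedBall.isOpen_compl).inter ht1.isOpen_compl)
          hWclosed.isOpen_compl
          (by
            intro z hz
            by_cases hzW : z ∈ C' ∩ t2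
            · exact Or.inl (hW ▸ hzW : z ∈ C ∩ _).2
            · exact Or.inr hzW)
          ⟨z0, hz0'.1, hz0'.2⟩
          ⟨x, hx, fun hxW =>
            (hW ▸ hxW : x ∈ C ∩ _).2.1 (Metric.mem_closedBall_self hr.le)⟩
        exact hpv (hW ▸ (⟨hpC, hpu⟩ : p ∈ C ∩ _))
      intro z hz
      rcases hsub hz with h | h
      · exact h
      · exact absurd (Set.mem_inter hz h)
          (Set.eq_empty_iff_forall_notMem.1 hWempty z)
    have hC'conn : IsConnected C' := by
      refine ⟨⟨y, hyC'⟩, (isPreconnected_iff_subset_of_fully_disjoint_closed hC'closed).2 ?_⟩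
      intro t1 t2 ht1 ht2 hsub hdisj
      rcases hsub hyC' with hy1 | hy2
      · exact Or.inl (hkey t1 t2 ht1 ht2 hsub hdisj hy1)
      · exact Or.inr (hkey t2 t1 ht2 ht1 (by rwa [Set.union_comm]) hdisj.symm hy2)
    have hdiff : C' \ Metric.closedBall x r = C \ Metric.closedBall x r := by
      rw [hC'def, Set.diff_diff, Set.union_eq_self_of_subset_left Metric.ball_subset_closedBall]
    have hle := hmin x hxU r hr hrr₀.le hB C' (hcomp.diff Metric.isOpen_ball) hC'conn hdiff
    have hC'cb : C' ∩ Metric.closedBall x r = {y} := by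
      ext z
      constructor
      · rintro ⟨⟨hzC, hzb⟩, hzcb⟩
        have hzs : z ∈ Metric.sphere x r :=
          le_antisymm hzcb (not_lt.1 (by simpa [Metric.mem_ball] using hzb))
        exact hnt z y ⟨hzC, hzs⟩ ⟨hyC, hyS⟩
      · rintro rfl
        exact ⟨hyC', Metric.sphere_subset_closedBall hyS⟩
    rw [hC'cb, hausdorff_one_singleton, mul_zero] at hle
    have hlb := ball_length_lb hconn.isPreconnected hx hyC hr.le hyx.ge
    have : ENNReal.ofReal r = 0 := nonpos_iff_eq_zero.1 (hlb.trans hle)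
    rw [ENNReal.ofReal_eq_zero] at this
    exact absurd this hr.not_ge
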